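/- The zeros of N(θ) = cos((m-1)θ) + cos(mθ) - cos((k-1)θ) - cos(kθ), where k = ⌈π/θ⌉ and m = ⌈3π/θ⌉, include all angles of the form θ = 4π/p (in radians; equivalently 720°/p) for integers p ≥ 4 with 4π/p < π. Specifically, for θ = 4π/p with p ≥ 5, N(θ) = 0. -/

import Mathlib

open Real

lemma ceil_cast_div_real (a b : ℕ) (ha : 0 < a) (hb : 0 < b) :
    ⌈(a : ℝ) / b⌉₊ = (a + b - 1) / b := by
  have hbR : (0:ℝ) < b := by exact_mod_cast hb
  set n := (a + b - 1) / b with hn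
  have h1 : b * n + (a + b - 1) % b = a + b - 1 := Nat.div_add_mod _ _
  have h2 : (a + b - 1) % b < b := Nat.mod_lt _ hb
  have hub : a ≤ b * n := by omega
  have hlb : b * n < a + b := by omega
  have hn0 : n ≠ 0 := by rintro h; rw [h, Nat.mul_zero] at hub; omega
  have hn1 : 1 ≤ n := Nat.one_le_iff_ne_zero.mpr hn0
  have hubR : (a : ℝ) ≤ b * n := by exact_mod_cast hub
  have hlbR : (b : ℝ) * n < a + b := by exact_mod_cast hlb
  rw [Nat.ceil_eq_iff hn0]
  constructor
  · rw [lt_div_iff₀ hbR, Nat.cast_sub hn1]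
    push_cast
    nlinarith
  · rw [div_le_iff₀ hbR]
    nlinarith
lemma cos_four_pi_sub (x : ℝ) : Real.cos (4 * π - x) = Real.cos x := by
  rw [show 4 * π - x = -((x - 2*π) - 2*π) by ring, Real.cos_neg,
    Real.cos_sub_two_pi, Real.cos_sub_two_pi]

theorem stmt16 (p : ℕ) (hp : 5 ≤ p) :
    let θ : ℝ := 4 * π / p
    let k : ℕ := ⌈π / θ⌉₊
    let m : ℕ := ⌈3 * π / θ⌉₊
    Real.cos (((m : ℝ) - 1) * θ) + Real.cos (m * θ)
      - Real.cos (((k : ℝ) - 1) * θ) - Real.cos (k * θ) = 0 := by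
  intro θ k m
  have hθd : θ = 4 * π / p := rfl
  have hp0 : (p : ℝ) ≠ 0 := by positivity
  have hπ : π ≠ 0 := Real.pi_ne_zero
  have hA : π / θ = (p : ℝ) / 4 := by
    rw [hθd]; field_simp
  have hB : 3 * π / θ = ((3 * p : ℕ) : ℝ) / 4 := by
    rw [hθd]; push_cast; field_simp
  have hk : k = (p + 3) / 4 := by
    show ⌈π / θ⌉₊ = _
    rw [hA, show (p:ℝ)/4 = ((p:ℕ):ℝ)/((4:ℕ):ℝ) by norm_num,
      ceil_cast_div_real p 4 (by omega) (by norm_num)]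
    omega
  have hm : m = (3 * p + 3) / 4 := by
    show ⌈3 * π / θ⌉₊ = _
    rw [hB, show ((3*p:ℕ):ℝ)/4 = ((3*p:ℕ):ℝ)/((4:ℕ):ℝ) by norm_num,
      ceil_cast_div_real (3*p) 4 (by omega) (by norm_num)]
    omega
  have hdisj : 2 * m = 2 * k + p ∨ m + k = p + 1 := by omega
  rcases hdisj with h | h
  · have hm' : (m : ℝ) = k + p / 2 := by
      have : ((2 * m : ℕ) : ℝ) = ((2 * k + p : ℕ) : ℝ) := by rw [h]
      push_cast at this; linarith
    have e1 : (m : ℝ) * θ = (k : ℝ) * θ + 2 * π := by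
      rw [hθd, hm']; field_simp; ring
    have e2 : ((m : ℝ) - 1) * θ = ((k : ℝ) - 1) * θ + 2 * π := by
      rw [hθd, hm']; field_simp; ring
    rw [e1, e2, Real.cos_add_two_pi, Real.cos_add_two_pi]; ring
  · have hm' : (m : ℝ) = p + 1 - k := by
      have : ((m + k : ℕ) : ℝ) = ((p + 1 : ℕ) : ℝ) := by rw [h]
      push_cast at this; linarith
    have e1 : (m : ℝ) * θ = 4 * π - ((k : ℝ) - 1) * θ := by
      rw [hθd, hm']; field_simp; ring
    have e2 : ((m : ℝ) - 1) * θ = 4 * π - (k : ℝ) * θ := by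
      rw [hθd, hm']; field_simp; ring
    rw [e1, e2, cos_four_pi_sub, cos_four_pi_sub]; ring
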